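/- arXiv:1802.05331 — 6 statements merged into one kernel-verified Lean document; each statement's English description precedes it below -/
import Mathlib

section
/- Let G be a finite simple graph with no isolated vertices containing no set of three pairwise disjoint edges (matching number at most 2), and let v be a vertex of G with degree at least 5. Then the graph obtained from G by deleting v, all edges incident to v, and any resulting isolated vertices is either empty, a star, or a triangle. -/
/-- If a finite simple graph without isolated vertices has no three pairwise
disjoint edges and `v` is a vertex of degree at least `5`, then deleting `v`,
its incident edges, and any resulting isolated vertices leaves a graph that is
empty, a star, or a triangle.  Here `S` is the vertex set remaining after the
deletion, and edges of the remaining graph are edges of `G` between vertices of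
`S`. -/
theorem delete_high_degree_vertex {V : Type*} [Fintype V] [DecidableEq V]
    (G : SimpleGraph V) [DecidableRel G.Adj]
    (h_no_isolated : ∀ v : V, ∃ w : V, G.Adj v w)
    (h_no_three_disjoint : ¬ ∃ a b c d e f : V,
      G.Adj a b ∧ G.Adj c d ∧ G.Adj e f ∧
      a ≠ c ∧ a ≠ d ∧ a ≠ e ∧ a ≠ f ∧ b ≠ c ∧ b ≠ d ∧ b ≠ e ∧ b ≠ f ∧
      c ≠ e ∧ c ≠ f ∧ d ≠ e ∧ d ≠ f)
    (v : V) (hv : 5 ≤ G.degree v)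
    (S : Set V) (hS : S = {w : V | w ≠ v ∧ ∃ u : V, u ≠ v ∧ G.Adj w u}) :
    (S = ∅) ∨
    (∃ x ∈ S, ∀ a b : V, a ∈ S → b ∈ S → G.Adj a b → a = x ∨ b = x) ∨
    (∃ x y z : V, x ∈ S ∧ y ∈ S ∧ z ∈ S ∧ x ≠ y ∧ y ≠ z ∧ x ≠ z ∧
      ∀ a b : V, a ∈ S → b ∈ S →
        (G.Adj a b ↔ s(a, b) ∈ ({s(x, y), s(y, z), s(x, z)} : Set (Sym2 V)))) := by
  subst hS
  -- Key: any two edges avoiding `v` must share a vertex.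
  have key : ∀ a b c d : V, a ≠ v → b ≠ v → c ≠ v → d ≠ v → G.Adj a b → G.Adj c d →
      a = c ∨ a = d ∨ b = c ∨ b = d := by
    intro a b c d ha hb hc hd hab hcd
    by_contra hcon
    push_neg at hcon
    obtain ⟨hac, had, hbc, hbd⟩ := hcon
    have h4 : ({a, b, c, d} : Finset V).card ≤ 4 := by
      have h1 := Finset.card_insert_le a ({b, c, d} : Finset V)
      have h2 := Finset.card_insert_le b ({c, d} : Finset V)
      have h3 := Finset.card_insert_le c ({d} : Finset V)
      simp only [Finset.card_singleton] at h3
      omega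
    have hns : ¬ (G.neighborFinset v ⊆ ({a, b, c, d} : Finset V)) := by
      intro hsub
      have hle := Finset.card_le_card hsub
      rw [SimpleGraph.card_neighborFinset_eq_degree] at hle
      omega
    obtain ⟨w, hw, hw'⟩ := Finset.not_subset.mp hns
    rw [SimpleGraph.mem_neighborFinset] at hw
    simp only [Finset.mem_insert, Finset.mem_singleton] at hw'
    push_neg at hw'
    obtain ⟨hwa, hwb, hwc, hwd⟩ := hw'
    exact h_no_three_disjoint ⟨a, b, c, d, v, w, hab, hcd, hw,
      hac, had, ha, Ne.symm hwa, hbc, hbd, hb, Ne.symm hwb,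
      hc, Ne.symm hwc, hd, Ne.symm hwd⟩
  have memS : ∀ x y : V, x ≠ v → y ≠ v → G.Adj x y →
      x ∈ {w : V | w ≠ v ∧ ∃ u : V, u ≠ v ∧ G.Adj w u} :=
    fun x y hx hy hxy => ⟨hx, y, hy, hxy⟩
  rcases Set.eq_empty_or_nonempty ({w : V | w ≠ v ∧ ∃ u : V, u ≠ v ∧ G.Adj w u}) with hE | ⟨a, ha⟩
  · exact Or.inl hE
  obtain ⟨hav, b, hbv, hab⟩ := ha
  by_cases hA : ∀ c d : V, c ≠ v → d ≠ v → G.Adj c d → c = a ∨ d = a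
  · refine Or.inr (Or.inl ⟨a, memS a b hav hbv hab, ?_⟩)
    intro p q hp hq hpq
    exact hA p q hp.1 hq.1 hpq
  push_neg at hA
  obtain ⟨c, d, hcv, hdv, hcd, hca, hda⟩ := hA
  -- there is an edge through b missing a
  have hbd' : ∃ d' : V, d' ≠ a ∧ d' ≠ v ∧ G.Adj b d' := by
    rcases key a b c d hav hbv hcv hdv hab hcd with h | h | h | h
    · exact absurd h.symm hca
    · exact absurd h.symm hda
    · exact ⟨d, hda, hdv, h ▸ hcd⟩
    · exact ⟨c, hca, hcv, h ▸ hcd.symm⟩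
  obtain ⟨d', hd'a, hd'v, hbd⟩ := hbd'
  by_cases hB : ∀ c d : V, c ≠ v → d ≠ v → G.Adj c d → c = b ∨ d = b
  · refine Or.inr (Or.inl ⟨b, memS b a hbv hav hab.symm, ?_⟩)
    intro p q hp hq hpq
    exact hB p q hp.1 hq.1 hpq
  push_neg at hB
  obtain ⟨e, f, hev, hfv, hef, heb, hfb⟩ := hB
  -- edge e f contains a
  have haf' : ∃ f' : V, f' ≠ b ∧ f' ≠ v ∧ G.Adj a f' := by
    rcases key a b e f hav hbv hev hfv hab hef with h | h | h | h
    · exact ⟨f, hfb, hfv, h ▸ hef⟩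
    · exact ⟨e, heb, hev, h ▸ hef.symm⟩
    · exact absurd h.symm heb
    · exact absurd h.symm hfb
  obtain ⟨f', hf'b, hf'v, haf⟩ := haf'
  have hdf : d' = f' := by
    rcases key b d' a f' hbv hd'v hav hf'v hbd haf with h | h | h | h
    · exact absurd h hab.ne.symm
    · exact absurd h hf'b.symm
    · exact absurd h hd'a
    · exact h
  subst hdf
  -- triangle a b d'
  have had : G.Adj a d' := haf
  have hnab : a ≠ b := hab.ne
  have hnbd : b ≠ d' := hbd.ne
  have hnad : a ≠ d' := had.ne
  have inTri : ∀ p q : V, p ≠ v → q ≠ v → G.Adj p q → p = a ∨ p = b ∨ p = d' := by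
    intro p q hpv hqv hpq
    by_contra hcon
    push_neg at hcon
    obtain ⟨hpa, hpb, hpd⟩ := hcon
    have k1 : q = a ∨ q = b := by
      rcases key p q a b hpv hqv hav hbv hpq hab with h | h | h | h
      · exact absurd h hpa
      · exact absurd h hpb
      · exact Or.inl h
      · exact Or.inr h
    have k2 : q = b ∨ q = d' := by
      rcases key p q b d' hpv hqv hbv hd'v hpq hbd with h | h | h | h
      · exact absurd h hpb
      · exact absurd h hpd
      · exact Or.inl h
      · exact Or.inr h
    have k3 : q = a ∨ q = d' := by
      rcases key p q a d' hpv hqv hav hd'v hpq had with h | h | h | h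
      · exact absurd h hpa
      · exact absurd h hpd
      · exact Or.inl h
      · exact Or.inr h
    rcases k1 with rfl | rfl
    · rcases k2 with h | h
      · exact hnab h
      · exact hnad h
    · rcases k3 with h | h
      · exact hnab h.symm
      · exact hnbd h
  refine Or.inr (Or.inr ⟨a, b, d', memS a b hav hbv hab, memS b a hbv hav hab.symm,
    memS d' a hd'v hav had.symm, hnab, hnbd, hnad, ?_⟩)
  intro p q hp hq
  constructor
  · intro hpq
    have hp3 := inTri p q hp.1 hq.1 hpq
    have hq3 := inTri q p hq.1 hp.1 hpq.symm
    have hne := hpq.ne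
    simp only [Set.mem_insert_iff, Set.mem_singleton_iff, Sym2.eq_iff]
    clear key inTri memS h_no_three_disjoint h_no_isolated hv hp hq
    clear hab hbd had hnab hnbd hnad hav hbv hd'v hda hca hd'a hf'b hf'v hcd
    rcases hp3 with rfl | rfl | rfl <;> rcases hq3 with rfl | rfl | rfl
    all_goals first
      | exact absurd rfl hne
      | tauto
  · intro h
    simp only [Set.mem_insert_iff, Set.mem_singleton_iff, Sym2.eq_iff] at h
    rcases h with (⟨h1, h2⟩ | ⟨h1, h2⟩) | (⟨h1, h2⟩ | ⟨h1, h2⟩) | (⟨h1, h2⟩ | ⟨h1, h2⟩) <;>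
      subst_vars
    · exact hab
    · exact hab.symm
    · exact hbd
    · exact hbd.symm
    · exact had
    · exact had.symm
end

section
/- For natural numbers a, b, c with b ≥ 1, the double sum ∑_{i=0}^{b} ∑_{j=0}^{a} C(a,j)·C(b,i)·(i+j)!·(b+c−i)·(a+2b+c−i−j−1)! / (a+2b+c)! equals 1 − b/((b+c+1)(b+c)), as an identity of rational numbers. -/
open Finset Nat

lemma key (a : ℕ) : ∀ i m : ℕ,
    (i + m + 1)! * ∑ j ∈ Finset.range (a + 1), a.choose j * (i + j)! * (a + m - j)!
      = i ! * m ! * (i + a + m + 1)! := by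
  induction a with
  | zero => intro i m; simp [Finset.sum_range_succ]; ring
  | succ a ih =>
    intro i m
    have h2 : ∑ j ∈ Finset.range (a + 1 + 1), a.choose j * (i + j)! * (a + (m+1) - j)!
        = (∑ j ∈ Finset.range (a + 1), a.choose (j+1) * (i + (j+1))! * (a + 1 + m - (j+1))!)
          + i ! * (a + 1 + m)! := by
      rw [Finset.sum_range_succ' (fun j => a.choose j * (i + j)! * (a + (m+1) - j)!)]
      congr 1
      · apply Finset.sum_congr rfl
        intro j hj
        congr 2
        omega
      · simp only [Nat.choose_zero_right, Nat.one_mul, Nat.add_zero, Nat.sub_zero]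
        congr 2
        omega
    have h2' : ∑ j ∈ Finset.range (a + 1 + 1), a.choose j * (i + j)! * (a + (m+1) - j)!
        = ∑ j ∈ Finset.range (a + 1), a.choose j * (i + j)! * (a + (m+1) - j)! := by
      rw [Finset.sum_range_succ]
      simp
    have hsplit : ∑ j ∈ Finset.range (a + 1 + 1), (a+1).choose j * (i + j)! * (a + 1 + m - j)!
        = (∑ j ∈ Finset.range (a + 1), a.choose j * (i + 1 + j)! * (a + m - j)!)
          + (∑ j ∈ Finset.range (a + 1), a.choose j * (i + j)! * (a + (m+1) - j)!) := by
      rw [Finset.sum_range_succ' (fun j => (a+1).choose j * (i + j)! * (a + 1 + m - j)!)]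
      have hterm : ∀ k ∈ Finset.range (a+1),
          (a+1).choose (k+1) * (i+(k+1))! * (a+1+m-(k+1))!
            = a.choose k * (i+1+k)! * (a+m-k)!
              + a.choose (k+1) * (i+(k+1))! * (a+1+m-(k+1))! := by
        intro k hk
        rw [Nat.choose_succ_succ]
        have e1 : a + 1 + m - (k+1) = a + m - k := by omega
        have e2 : i + (k+1) = i + 1 + k := by omega
        rw [e1, e2]
        ring
      rw [Finset.sum_congr rfl hterm, Finset.sum_add_distrib]
      simp only [Nat.choose_zero_right, Nat.one_mul, Nat.add_zero, Nat.sub_zero]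
      rw [add_assoc]
      congr 1
      rw [← h2, h2']
    rw [hsplit]
    apply Nat.eq_of_mul_eq_mul_left (show 0 < i + m + 2 by omega)
    have hA := ih (i+1) m
    have hB := ih i (m+1)
    have e3 : i + 1 + m + 1 = i + m + 2 := by ring
    have e4 : i + (m+1) + 1 = i + m + 2 := by ring
    rw [e3] at hA
    rw [e4] at hB
    have e5 : (i + m + 2)! = (i + m + 2) * (i + m + 1)! := rfl
    calc (i + m + 2) * ((i + m + 1)! *
          ((∑ j ∈ Finset.range (a + 1), a.choose j * (i + 1 + j)! * (a + m - j)!)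
          + ∑ j ∈ Finset.range (a + 1), a.choose j * (i + j)! * (a + (m+1) - j)!))
        = (i + m + 2)! * (∑ j ∈ Finset.range (a + 1), a.choose j * (i + 1 + j)! * (a + m - j)!)
          + (i + m + 2)! * (∑ j ∈ Finset.range (a + 1), a.choose j * (i + j)! * (a + (m+1) - j)!) := by
          rw [e5]; ring
      _ = (i+1)! * m ! * (i + 1 + a + m + 1)! + i ! * (m+1)! * (i + a + (m+1) + 1)! := by rw [hA, hB]
      _ = (i + m + 2) * (i ! * m ! * (i + (a + 1) + m + 1)!) := by
          have e6 : i + 1 + a + m + 1 = i + (a+1) + m + 1 := by ring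
          have e7 : i + a + (m+1) + 1 = i + (a+1) + m + 1 := by ring
          have f1 : (i+1)! = (i+1) * i ! := Nat.factorial_succ i
          have f2 : (m+1)! = (m+1) * m ! := Nat.factorial_succ m
          rw [e6, e7, f1, f2]
          ring

theorem GS_top_double_sum (a b c : ℕ) (hb : 1 ≤ b) :
    ∑ i ∈ Finset.range (b + 1), ∑ j ∈ Finset.range (a + 1),
        ((a.choose j : ℚ) * (b.choose i) * (i + j)! * (b + c - i)
            * (a + 2 * b + c - i - j - 1)!) / ((a + 2 * b + c)! : ℚ)
      = 1 - (b : ℚ) / (((b : ℚ) + c + 1) * ((b : ℚ) + c)) := by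
  have hM : ((2*b+c)! : ℚ) ≠ 0 := Nat.cast_ne_zero.mpr (Nat.factorial_ne_zero _)
  have hN : ((a+2*b+c)! : ℚ) ≠ 0 := Nat.cast_ne_zero.mpr (Nat.factorial_ne_zero _)
  have hF : (((b+c-1)!) : ℚ) ≠ 0 := Nat.cast_ne_zero.mpr (Nat.factorial_ne_zero _)
  have hX : ((b:ℚ)+c) ≠ 0 := by
    have : (1:ℚ) ≤ (b:ℚ) := by exact_mod_cast hb
    have hc : (0:ℚ) ≤ (c:ℚ) := by positivity
    nlinarith
  have hX1 : ((b:ℚ)+c+1) ≠ 0 := by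
    have : (1:ℚ) ≤ (b:ℚ) := by exact_mod_cast hb
    have hc : (0:ℚ) ≤ (c:ℚ) := by positivity
    nlinarith
  -- Step 1: inner sum
  have hinner : ∀ i ∈ Finset.range (b+1),
      (∑ j ∈ Finset.range (a + 1),
        ((a.choose j : ℚ) * (b.choose i) * (i + j)! * (b + c - i)
            * (a + 2 * b + c - i - j - 1)!) / ((a + 2 * b + c)! : ℚ))
      = (((b:ℚ)+c) * ((b.choose i * i ! * (2*b+c-1-i)! : ℕ) : ℚ)
          - ((i * (b.choose i * i ! * (2*b+c-1-i)!) : ℕ) : ℚ)) / ((2*b+c)! : ℚ) := by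
    intro i hi
    rw [Finset.mem_range] at hi
    have hk := key a i (2*b+c-1-i)
    have e1 : i + (2*b+c-1-i) + 1 = 2*b+c := by omega
    have e2 : i + a + (2*b+c-1-i) + 1 = a+2*b+c := by omega
    rw [e1, e2] at hk
    have hsum : ∑ j ∈ Finset.range (a+1), a.choose j * (i+j)! * (a + (2*b+c-1-i) - j)!
        = ∑ j ∈ Finset.range (a+1), a.choose j * (i+j)! * (a+2*b+c-i-j-1)! := by
      apply Finset.sum_congr rfl
      intro j hj
      rw [Finset.mem_range] at hj
      congr 2
      omega
    rw [hsum] at hk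
    have hkQ : ((2*b+c)! : ℚ) *
        ((∑ j ∈ Finset.range (a+1), a.choose j * (i+j)! * (a+2*b+c-i-j-1)! : ℕ) : ℚ)
        = (i ! : ℚ) * ((2*b+c-1-i)! : ℚ) * ((a+2*b+c)! : ℚ) := by exact_mod_cast congrArg (Nat.cast : ℕ → ℚ) hk
    have hSig : ((∑ j ∈ Finset.range (a+1), a.choose j * (i+j)! * (a+2*b+c-i-j-1)! : ℕ) : ℚ)
        = (i ! : ℚ) * ((2*b+c-1-i)! : ℚ) * ((a+2*b+c)! : ℚ) / ((2*b+c)! : ℚ) := by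
      rw [eq_div_iff hM]
      linear_combination hkQ
    calc ∑ j ∈ Finset.range (a + 1),
        ((a.choose j : ℚ) * (b.choose i) * (i + j)! * (b + c - i)
            * (a + 2 * b + c - i - j - 1)!) / ((a + 2 * b + c)! : ℚ)
        = (b.choose i : ℚ) * ((b:ℚ)+c-(i:ℚ)) / ((a+2*b+c)! : ℚ)
          * ((∑ j ∈ Finset.range (a+1), a.choose j * (i+j)! * (a+2*b+c-i-j-1)! : ℕ) : ℚ) := by
          rw [Nat.cast_sum, Finset.mul_sum]
          apply Finset.sum_congr rfl
          intro j hj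
          push_cast
          ring
      _ = (((b:ℚ)+c) * ((b.choose i * i ! * (2*b+c-1-i)! : ℕ) : ℚ)
          - ((i * (b.choose i * i ! * (2*b+c-1-i)!) : ℕ) : ℚ)) / ((2*b+c)! : ℚ) := by
          rw [hSig]
          push_cast
          field_simp
  rw [Finset.sum_congr rfl hinner]
  -- Step 2: the two outer sums
  have hT0 : (b+c)! * ∑ i ∈ Finset.range (b+1), b.choose i * i ! * (2*b+c-1-i)!
      = (b+c-1)! * (2*b+c)! := by
    have hk := key b 0 (b+c-1)
    have e1 : 0 + (b+c-1) + 1 = b+c := by omega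
    have e2 : 0 + b + (b+c-1) + 1 = 2*b+c := by omega
    rw [e1, e2] at hk
    have hsum : ∑ j ∈ Finset.range (b+1), b.choose j * (0+j)! * (b + (b+c-1) - j)!
        = ∑ i ∈ Finset.range (b+1), b.choose i * i ! * (2*b+c-1-i)! := by
      apply Finset.sum_congr rfl
      intro j hj
      have e3 : b + (b+c-1) - j = 2*b+c-1-j := by omega
      rw [e3, Nat.zero_add]
    rw [hsum] at hk
    simpa using hk
  have hT1 : (b+c+1)! * ∑ i ∈ Finset.range (b+1), i * (b.choose i * i ! * (2*b+c-1-i)!)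
      = b * ((b+c-1)! * (2*b+c)!) := by
    obtain ⟨b', rfl⟩ : ∃ b', b = b' + 1 := ⟨b - 1, by omega⟩
    set b := b' + 1 with hbdef
    rw [Finset.sum_range_succ' (fun i => i * (b.choose i * i ! * (2*b+c-1-i)!))]
    simp only [Nat.zero_mul, Nat.add_zero]
    have hterm : ∀ k ∈ Finset.range b,
        (k+1) * (b.choose (k+1) * (k+1)! * (2*b+c-1-(k+1))!)
          = b * (b'.choose k * (1+k)! * (b' + (b+c-1) - k)!) := by
      intro k hk
      have hc : (k+1) * b.choose (k+1) = b * b'.choose k := by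
        show (k+1) * (b'+1).choose (k+1) = (b'+1) * b'.choose k
        rw [mul_comm]
        simpa [Nat.succ_eq_add_one] using (Nat.add_one_mul_choose_eq b' k).symm
      have e3 : 2*b+c-1-(k+1) = b' + (b+c-1) - k := by omega
      have e4 : (k+1)! = (1+k)! := by rw [Nat.add_comm]
      calc (k+1) * (b.choose (k+1) * (k+1)! * (2*b+c-1-(k+1))!)
          = ((k+1) * b.choose (k+1)) * (k+1)! * (2*b+c-1-(k+1))! := by ring
        _ = b * (b'.choose k * (1+k)! * (b' + (b+c-1) - k)!) := by rw [hc, e3, e4]; ring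
    rw [Finset.sum_congr rfl hterm, ← Finset.mul_sum]
    have hk := key b' 1 (b+c-1)
    have e1 : 1 + (b+c-1) + 1 = b+c+1 := by omega
    have e2 : 1 + b' + (b+c-1) + 1 = 2*b+c := by omega
    rw [e1, e2] at hk
    have hb' : b' + 1 = b := rfl
    calc (b+c+1)! * (b * ∑ k ∈ Finset.range (b'+1), b'.choose k * (1+k)! * (b' + (b+c-1) - k)!)
        = b * ((b+c+1)! * ∑ k ∈ Finset.range (b'+1), b'.choose k * (1+k)! * (b' + (b+c-1) - k)!) := by ring
      _ = b * ((b+c-1)! * (2*b+c)!) := by rw [hk]; simp [Nat.factorial_one]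
  -- assemble
  have hsum2 : ∑ i ∈ Finset.range (b+1),
      ((((b:ℚ)+c) * ((b.choose i * i ! * (2*b+c-1-i)! : ℕ) : ℚ)
          - ((i * (b.choose i * i ! * (2*b+c-1-i)!) : ℕ) : ℚ)) / ((2*b+c)! : ℚ))
      = (((b:ℚ)+c) * ((∑ i ∈ Finset.range (b+1), b.choose i * i ! * (2*b+c-1-i)! : ℕ) : ℚ)
          - ((∑ i ∈ Finset.range (b+1), i * (b.choose i * i ! * (2*b+c-1-i)!) : ℕ) : ℚ))
        / ((2*b+c)! : ℚ) := by
    rw [← Finset.sum_div]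
    congr 1
    rw [Nat.cast_sum, Nat.cast_sum, Finset.mul_sum, ← Finset.sum_sub_distrib]
  rw [hsum2]
  have hf1 : ((b+c)! : ℚ) = ((b:ℚ)+c) * ((b+c-1)! : ℚ) := by
    have e : b+c-1+1 = b+c := by omega
    rw [← e, Nat.factorial_succ]
    push_cast [Nat.cast_sub (show 1 ≤ b+c by omega)]
    ring
  have hf2 : ((b+c+1)! : ℚ) = ((b:ℚ)+c+1) * (((b:ℚ)+c) * ((b+c-1)! : ℚ)) := by
    rw [Nat.factorial_succ, ← hf1]
    push_cast
    ring
  have hT0q : ((b:ℚ)+c) * ((b+c-1)! : ℚ)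
      * ((∑ i ∈ Finset.range (b+1), b.choose i * i ! * (2*b+c-1-i)! : ℕ) : ℚ)
      = ((b+c-1)! : ℚ) * ((2*b+c)! : ℚ) := by
    rw [← hf1]
    exact_mod_cast congrArg (Nat.cast : ℕ → ℚ) hT0
  have hT1q : ((b:ℚ)+c+1) * (((b:ℚ)+c) * ((b+c-1)! : ℚ))
      * ((∑ i ∈ Finset.range (b+1), i * (b.choose i * i ! * (2*b+c-1-i)!) : ℕ) : ℚ)
      = (b:ℚ) * (((b+c-1)! : ℚ) * ((2*b+c)! : ℚ)) := by
    rw [← hf2]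
    exact_mod_cast congrArg (Nat.cast : ℕ → ℚ) hT1
  have hT0' : ((∑ i ∈ Finset.range (b+1), b.choose i * i ! * (2*b+c-1-i)! : ℕ) : ℚ)
      = ((2*b+c)! : ℚ) / ((b:ℚ)+c) := by
    rw [eq_div_iff hX]
    apply mul_left_cancel₀ hF
    linear_combination hT0q
  have hT1' : ((∑ i ∈ Finset.range (b+1), i * (b.choose i * i ! * (2*b+c-1-i)!) : ℕ) : ℚ)
      = (b:ℚ) * ((2*b+c)! : ℚ) / (((b:ℚ)+c+1) * ((b:ℚ)+c)) := by
    rw [eq_div_iff (mul_ne_zero hX1 hX)]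
    apply mul_left_cancel₀ hF
    linear_combination hT1q
  rw [hT0', hT1']
  field_simp
end

section
/- For natural numbers b and c with b+c ≥ 1, ∑_{i=0}^{b} (b+c−i)·C(2b+c−1−i, b+c−1) = (b+c)·C(2b+c, b+c) − C(2b+c, b+c+1). -/
open Finset Nat

lemma GS_aux (n c : ℕ) (m : ℕ) :
    ∑ j ∈ Finset.range (m + 1), (c + j) * (n + j).choose n
      = c * (n + 1 + m).choose (n + 1) + (n + 1) * (n + 1 + m).choose (n + 2) := by
  induction m with
  | zero => simp [Nat.choose_succ_self]
  | succ m ih =>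
    rw [Finset.sum_range_succ, ih]
    have e1 : n + 1 + (m + 1) = (n + 1 + m) + 1 := by omega
    have e2 : n + 1 + m = (n + m) + 1 := by omega
    have e3 : n + (m + 1) = (n + m) + 1 := by omega
    rw [e1, e2, e3, Nat.choose_succ_succ ((n+m)+1) (n+1), Nat.choose_succ_succ ((n+m)+1) n]
    have key : ((n+m)+1).choose (n + 1) * (n + 1) = ((n+m)+1).choose n * (m + 1) := by
      have := Nat.choose_succ_right_eq ((n+m)+1) n
      have h : (n + m) + 1 - n = m + 1 := by omega
      rw [h] at this
      exact this
    have expand : c * (((n+m)+1).choose n + ((n+m)+1).choose (n+1))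
        + (n + 1) * (((n+m)+1).choose (n+1) + ((n+m)+1).choose (n+2))
        = c * (((n+m)+1).choose n + ((n+m)+1).choose (n+1))
        + (((n+m)+1).choose (n+1) * (n + 1) + (n + 1) * ((n+m)+1).choose (n+2)) := by ring
    rw [expand, key]
    ring

theorem GS_inner_sum (b c : ℕ) (hbc : 1 ≤ b + c) :
    ∑ i ∈ Finset.range (b + 1), (b + c - i) * (2 * b + c - 1 - i).choose (b + c - 1)
      = (b + c) * (2 * b + c).choose (b + c) - (2 * b + c).choose (b + c + 1) := by
  obtain ⟨n, hn⟩ : ∃ n, b + c = n + 1 := ⟨b + c - 1, by omega⟩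
  rw [← Finset.sum_range_reflect]
  have step : ∑ j ∈ Finset.range (b + 1),
      (b + c - (b + 1 - 1 - j)) * (2 * b + c - 1 - (b + 1 - 1 - j)).choose (b + c - 1)
      = ∑ j ∈ Finset.range (b + 1), (c + j) * (n + j).choose n := by
    apply Finset.sum_congr rfl
    intro j hj
    have hjb : j ≤ b := by
      have := Finset.mem_range.mp hj; omega
    have e1 : b + c - (b + 1 - 1 - j) = c + j := by omega
    have e2 : 2 * b + c - 1 - (b + 1 - 1 - j) = n + j := by omega
    have e3 : b + c - 1 = n := by omega
    rw [e1, e2, e3]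
  rw [step, GS_aux n c b]
  have e4 : n + 1 + b = 2 * b + c := by omega
  have e5 : n + 2 = (b + c) + 1 := by omega
  have e6 : n + 1 = b + c := by omega
  rw [e4, e5, e6]
  have key : (2 * b + c).choose ((b + c) + 1) * ((b + c) + 1)
      = (2 * b + c).choose (b + c) * b := by
    have := Nat.choose_succ_right_eq (2 * b + c) (b + c)
    have h : 2 * b + c - (b + c) = b := by omega
    rw [h] at this
    exact this
  set X := (2 * b + c).choose (b + c) with hX
  set Y := (2 * b + c).choose ((b + c) + 1) with hY
  have h' : (b + c) * X = (c * X + (b + c) * Y) + Y := by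
    calc (b + c) * X = c * X + X * b := by ring
      _ = c * X + Y * ((b + c) + 1) := by rw [key]
      _ = (c * X + (b + c) * Y) + Y := by ring
  exact (Nat.sub_eq_of_eq_add h').symm
end

section
/- Define f(a,b,c) = b/((b+c+1)(b+c)) + b/((a+b+1)(a+b)) for positive integers a, b, c (a rational number). Then for all positive integers s, t such that s divides 2t(t+1), setting r = 2t(t+1)/s, one has f(r+3t+1, s, t) = f(t, r+s+2t+1, t) = f(3t+s+1, r, t). -/
set_option maxHeartbeats 1000000


/-- `f a b c` is the probability `P(GS_{a,b,c},1)` of one tree in the forest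
building process on the glued stars `GS_{a,b,c}`. -/
def f (a b c : ℕ) : ℚ :=
  (b : ℚ) / (((b : ℚ) + c + 1) * ((b : ℚ) + c))
    + (b : ℚ) / (((a : ℚ) + b + 1) * ((a : ℚ) + b))

theorem famA (s t : ℕ) (hs : 0 < s) (ht : 0 < t) (hdvd : s ∣ 2 * t * (t + 1)) :
    f (2 * t * (t + 1) / s + 3 * t + 1) s t
        = f t (2 * t * (t + 1) / s + s + 2 * t + 1) t ∧
      f (2 * t * (t + 1) / s + 3 * t + 1) s t
        = f (3 * t + s + 1) (2 * t * (t + 1) / s) t := by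
  set r := 2 * t * (t + 1) / s with hrdef
  have hsr : s * r = 2 * t * (t + 1) := Nat.mul_div_cancel' hdvd
  have hsQ : (0:ℚ) < s := by exact_mod_cast hs
  have htQ : (0:ℚ) < t := by exact_mod_cast ht
  have hrQ : (0:ℚ) ≤ r := by positivity
  have hsrQ : (s:ℚ) * r = 2 * t * (t + 1) := by exact_mod_cast congrArg (Nat.cast : ℕ → ℚ) hsr
  have hr : (r:ℚ) = 2 * t * (t + 1) / (s:ℚ) := by
    rw [eq_div_iff (ne_of_gt hsQ)]; linarith [hsrQ]
  unfold f
  push_cast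
  rw [hr]
  have hs' : (s:ℚ) ≠ 0 := ne_of_gt hsQ
  constructor
  · field_simp
    ring
  · field_simp
    ring
end

section
/- Define f(a,b,c) = b/((b+c+1)(b+c)) + b/((a+b+1)(a+b)) for positive integers a, b, c. Then for every positive integer t, f(5t+3, t, 2t) = f(5t+1, t+1, 2t+1). -/
theorem famB (t : ℕ) (ht : 0 < t) :
    f (5 * t + 3) t (2 * t) = f (5 * t + 1) (t + 1) (2 * t + 1) := by
  have h : (1:ℚ) ≤ (t:ℚ) := by exact_mod_cast ht
  simp only [f]
  push_cast
  have p1 : (0:ℚ) < ((t:ℚ) + 2 * t + 1) * ((t:ℚ) + 2 * t) := mul_pos (by nlinarith) (by nlinarith)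
  have p2 : (0:ℚ) < (5 * (t:ℚ) + 3 + t + 1) * (5 * (t:ℚ) + 3 + t) := mul_pos (by nlinarith) (by nlinarith)
  have p3 : (0:ℚ) < ((t:ℚ) + 1 + (2 * t + 1) + 1) * ((t:ℚ) + 1 + (2 * t + 1)) := mul_pos (by nlinarith) (by nlinarith)
  have p4 : (0:ℚ) < (5 * (t:ℚ) + 1 + (t + 1) + 1) * (5 * (t:ℚ) + 1 + (t + 1)) := mul_pos (by nlinarith) (by nlinarith)
  rw [div_add_div _ _ p1.ne' p2.ne', div_add_div _ _ p3.ne' p4.ne',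
    div_eq_div_iff (mul_pos p1 p2).ne' (mul_pos p3 p4).ne']
  ring
end

section
/- For the formula P(K_n,k) = C(n−1; n−2k, k, k−1)·2^{n−2k} / C(2n−2, n) (with multinomial coefficient C(n−1; n−2k, k, k−1) = (n−1)!/((n−2k)!·k!·(k−1)!)), the probabilities sum to 1: for every n ≥ 2, ∑_{k=1}^{⌊n/2⌋} (n−1)!·2^{n−2k} / ((n−2k)!·k!·(k−1)!) = C(2n−2, n). -/
open Finset Nat Polynomial

lemma choose_sum_eq (n : ℕ) (hn : 2 ≤ n) :
    ∑ k ∈ Finset.Icc 1 (n / 2),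
        (n - 1).choose (n - k) * ((n - k).choose k * 2 ^ (n - 2 * k))
      = (2 * n - 2).choose n := by
  have key : ((2 * n - 2).choose n : ℕ) = ((1 + X : ℕ[X]) ^ (2 * n - 2)).coeff n :=
    (coeff_one_add_X_pow ℕ _ n).symm
  have hsq : ((1 + X : ℕ[X])) ^ (2 * n - 2) = ((X + C 2) * X + 1) ^ (n - 1) := by
    have h1 : ((X + C 2) * X + 1 : ℕ[X]) = (1 + X) ^ 2 := by
      have h2 : (C 2 : ℕ[X]) = 2 := by simp
      rw [h2]; ring
    rw [h1, ← pow_mul]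
    congr 1
    omega
  rw [key, hsq, add_pow, finset_sum_coeff]
  have hterm : ∀ i ∈ Finset.range (n - 1 + 1),
      (((X + C 2) * X) ^ i * 1 ^ (n - 1 - i) * ((n - 1).choose i : ℕ[X])).coeff n
        = 2 ^ (i - (n - i)) * i.choose (n - i) * (n - 1).choose i := by
    intro i hi
    rw [one_pow, mul_one, mul_pow, ← C_eq_natCast, coeff_mul_C, coeff_mul_X_pow',
      if_pos (by simp at hi; omega), coeff_X_add_C_pow]
    simp
  rw [Finset.sum_congr rfl hterm, show n - 1 + 1 = n by omega]
  have hext : ∑ k ∈ Finset.Icc 1 (n / 2),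
        (n - 1).choose (n - k) * ((n - k).choose k * 2 ^ (n - 2 * k))
      = ∑ k ∈ Finset.Icc 1 n,
        (n - 1).choose (n - k) * ((n - k).choose k * 2 ^ (n - 2 * k)) := by
    apply Finset.sum_subset
    · intro k hk; simp at hk ⊢; omega
    · intro k hk hk2
      simp only [Finset.mem_Icc] at hk hk2
      rw [Nat.choose_eq_zero_of_lt (show n - k < k by omega)]
      ring
  rw [hext]
  refine Finset.sum_nbij' (i := fun k => n - k) (j := fun i => n - i) ?_ ?_ ?_ ?_ ?_
  · intro k hk; simp at hk ⊢; omega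
  · intro i hi; simp at hi ⊢; omega
  · intro k hk; simp at hk; show n - (n - k) = k; omega
  · intro i hi; simp at hi; show n - (n - i) = i; omega
  · intro k hk
    simp only [Finset.mem_Icc] at hk
    rw [show n - (n - k) = k by omega, show n - k - k = n - 2 * k by omega]
    ring

/-- The forest-building probabilities for the complete graph `K_n` sum to `1`:
`∑_{k=1}^{⌊n/2⌋} (n-1)! 2^(n-2k) / ((n-2k)! k! (k-1)!) = C(2n-2, n)`. -/
theorem Kn_prob_sum (n : ℕ) (hn : 2 ≤ n) :
    ∑ k ∈ Finset.Icc 1 (n / 2),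
        (((n - 1)! : ℚ) * 2 ^ (n - 2 * k))
          / (((n - 2 * k)! : ℚ) * (k ! : ℚ) * ((k - 1)! : ℚ))
      = ((2 * n - 2).choose n : ℚ) := by
  rw [← choose_sum_eq n hn]
  push_cast
  refine Finset.sum_congr rfl ?_
  intro k hk
  simp only [Finset.mem_Icc] at hk
  have hk2 : 2 * k ≤ n := by omega
  have h1 : n - k ≤ n - 1 := by omega
  have h2 : k ≤ n - k := by omega
  rw [Nat.cast_choose ℚ h1, Nat.cast_choose ℚ h2,
    show n - 1 - (n - k) = k - 1 by omega, show n - k - k = n - 2 * k by omega]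
  have f1 : ((n - 2 * k)! : ℚ) ≠ 0 := Nat.cast_ne_zero.mpr (Nat.factorial_ne_zero _)
  have f2 : ((k)! : ℚ) ≠ 0 := Nat.cast_ne_zero.mpr (Nat.factorial_ne_zero _)
  have f3 : ((k - 1)! : ℚ) ≠ 0 := Nat.cast_ne_zero.mpr (Nat.factorial_ne_zero _)
  have f4 : ((n - k)! : ℚ) ≠ 0 := Nat.cast_ne_zero.mpr (Nat.factorial_ne_zero _)
  field_simp
end
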